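/- Two nonzero (N+1)×(N+1) matrices over a field have the same corner polyhedron if and only if they have the same profile (as a Dyck path). -/

import Mathlib

open Pointwise
open scoped Classical

/-- The functional summing the first `k+1` coordinates (the `(k+1)`-st partial sum `s_{k+1}`). -/
def sfun (N : ℕ) (k : Fin N) (w : Fin (N + 1) → ℝ) : ℝ :=
  ∑ l ∈ Finset.univ.filter (fun l : Fin (N + 1) => (l : ℕ) ≤ (k : ℕ)), w l

/-- The root vector `e_i - e_j` of the `A_N` lattice. -/
def rootVec (N : ℕ) (i j : Fin (N + 1)) : Fin (N + 1) → ℝ :=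
  Pi.single i 1 - Pi.single j 1

/-- The cone `O⁺` of sum-zero vectors on which all partial-sum functionals are nonnegative. -/
def Oplus (N : ℕ) : Set (Fin (N + 1) → ℝ) :=
  {w | (∑ l, w l = 0) ∧ ∀ k : Fin N, 0 ≤ sfun N k w}

/-- `(i,j)` outweighs `(i',j')` if `e_{i'} - e_{j'} ∈ (e_i - e_j) + O⁺` and the two differ. -/
def Outweighs (N : ℕ) (p q : Fin (N + 1) × Fin (N + 1)) : Prop :=
  rootVec N q.1 q.2 ≠ rootVec N p.1 p.2 ∧
  ∃ o : Fin (N + 1) → ℝ, o ∈ Oplus N ∧ rootVec N q.1 q.2 = rootVec N p.1 p.2 + o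

/-- The corner polyhedron of a nonzero matrix: the corner hull (relative to the cone `O⁺`)
of the root vectors `e_i - e_j` over the nonzero entries `(i,j)` of `M`. -/
def cornerOf {K : Type*} [Field K] (N : ℕ) (M : Matrix (Fin (N + 1)) (Fin (N + 1)) K) :
    Set (Fin (N + 1) → ℝ) :=
  convexHull ℝ ((fun p : Fin (N + 1) × Fin (N + 1) => rootVec N p.1 p.2) ''
      {p | M p.1 p.2 ≠ 0}) + Oplus N

/-- The Hessenberg function of `M` relative to the standard complete flag:
`hessFn N M i = min { j : M S_i ⊆ S_j }` where `S_i` is the span of the first `i`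
standard basis vectors. -/
noncomputable def hessFn {K : Type*} [Field K] (N : ℕ)
    (M : Matrix (Fin (N + 1)) (Fin (N + 1)) K) (i : ℕ) : ℕ :=
  sSup {h : ℕ | ∃ r c : Fin (N + 1), M r c ≠ 0 ∧ (c : ℕ) < i ∧ h = (r : ℕ) + 1}

/-- The profile of a nonzero matrix, encoded as a function `{0,…,N+1} → {0,…,N+1}`:
for a strictly upper-triangular matrix it is the Hessenberg function of the standard
complete flag (the minimal Dyck path on one side of the diagonal containing all nonzero
entries); otherwise it is the pointwise maximum of the identity and that Hessenberg
function (the minimal Dyck path on the other side of the diagonal containing all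
nonzero entries). -/
noncomputable def profileFn {K : Type*} [Field K] (N : ℕ)
    (M : Matrix (Fin (N + 1)) (Fin (N + 1)) K) (i : ℕ) : ℕ :=
  if ∃ r c : Fin (N + 1), (c : ℕ) ≤ (r : ℕ) ∧ M r c ≠ 0 then max i (hessFn N M i)
  else hessFn N M i

-- basic computations
lemma sfun_root (N : ℕ) (k : Fin N) (i j : Fin (N + 1)) :
    sfun N k (rootVec N i j)
      = (if (i : ℕ) ≤ (k : ℕ) then (1:ℝ) else 0) - (if (j : ℕ) ≤ (k : ℕ) then (1:ℝ) else 0) := by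
  unfold sfun rootVec
  simp only [Pi.sub_apply]
  rw [Finset.sum_sub_distrib]
  congr 1 <;>
  · simp [Pi.single_apply, Finset.sum_ite_eq']

lemma sum_root (N : ℕ) (i j : Fin (N + 1)) : ∑ l, rootVec N i j l = 0 := by
  unfold rootVec
  simp only [Pi.sub_apply]
  rw [Finset.sum_sub_distrib]
  simp

lemma sfun_sub (N : ℕ) (k : Fin N) (v w : Fin (N+1) → ℝ) :
    sfun N k (v - w) = sfun N k v - sfun N k w := by
  unfold sfun; simp only [Pi.sub_apply]; rw [Finset.sum_sub_distrib]

lemma root_diff_mem_Oplus {N : ℕ} {i j a b : Fin (N + 1)}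
    (h : ∀ k : Fin N, sfun N k (rootVec N a b) ≤ sfun N k (rootVec N i j)) :
    rootVec N i j - rootVec N a b ∈ Oplus N := by
  constructor
  · have : ∑ l, (rootVec N i j l - rootVec N a b l) = 0 := by
      rw [Finset.sum_sub_distrib, sum_root, sum_root]; ring
    simpa using this
  · intro k
    rw [sfun_sub]
    linarith [h k]

lemma mem_corner_of_entry {K : Type*} [Field K] {N : ℕ}
    {M : Matrix (Fin (N + 1)) (Fin (N + 1)) K} {a b : Fin (N + 1)} (hab : M a b ≠ 0)
    {i j : Fin (N + 1)}
    (h : ∀ k : Fin N, sfun N k (rootVec N a b) ≤ sfun N k (rootVec N i j)) :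
    rootVec N i j ∈ cornerOf N M := by
  have hmem : rootVec N a b ∈ convexHull ℝ
      ((fun p : Fin (N + 1) × Fin (N + 1) => rootVec N p.1 p.2) '' {p | M p.1 p.2 ≠ 0}) :=
    subset_convexHull _ _ ⟨(a, b), hab, rfl⟩
  have := Set.add_mem_add hmem (root_diff_mem_Oplus h)
  simpa [cornerOf] using this

-- the linear functional given by a set of partial sums
noncomputable def phiS (N : ℕ) (S : Finset (Fin N)) : (Fin (N + 1) → ℝ) →ₗ[ℝ] ℝ :=
  ∑ k ∈ S, ∑ l ∈ Finset.univ.filter (fun l : Fin (N + 1) => (l : ℕ) ≤ (k : ℕ)),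
    LinearMap.proj (R := ℝ) (φ := fun _ : Fin (N+1) => ℝ) l

lemma phiS_apply (N : ℕ) (S : Finset (Fin N)) (w : Fin (N + 1) → ℝ) :
    phiS N S w = ∑ k ∈ S, sfun N k w := by
  unfold phiS sfun
  simp [LinearMap.sum_apply]

lemma corner_bound {K : Type*} [Field K] {N : ℕ}
    {M : Matrix (Fin (N + 1)) (Fin (N + 1)) K} (S : Finset (Fin N)) (b : ℝ)
    (hgen : ∀ p : Fin (N + 1) × Fin (N + 1), M p.1 p.2 ≠ 0 →
      b ≤ ∑ k ∈ S, sfun N k (rootVec N p.1 p.2)) :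
    ∀ x ∈ cornerOf N M, b ≤ ∑ k ∈ S, sfun N k x := by
  intro x hx
  obtain ⟨y, hy, o, ho, rfl⟩ := hx
  have hconv : y ∈ {w | b ≤ phiS N S w} := by
    refine convexHull_min ?_ ?_ hy
    · rintro _ ⟨p, hp, rfl⟩
      simpa [phiS_apply] using hgen p hp
    · exact convex_halfSpace_ge (LinearMap.isLinear _) b
  have hoS : 0 ≤ phiS N S o := by
    rw [phiS_apply]
    exact Finset.sum_nonneg fun k _ => ho.2 k
  have : b ≤ phiS N S (y + o) := by rw [map_add]; linarith [Set.mem_setOf_eq ▸ hconv]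
  rw [phiS_apply] at this
  exact this
section Hess
variable {K : Type*} [Field K] {N : ℕ} {M : Matrix (Fin (N + 1)) (Fin (N + 1)) K}

lemma hess_bdd (i : ℕ) :
    BddAbove {h : ℕ | ∃ r c : Fin (N + 1), M r c ≠ 0 ∧ (c : ℕ) < i ∧ h = (r : ℕ) + 1} := by
  refine ⟨N + 1, ?_⟩
  rintro h ⟨r, c, _, _, rfl⟩
  exact Nat.add_le_add_right (Nat.lt_succ_iff.mp r.isLt) 1

lemma hess_le (i : ℕ) : hessFn N M i ≤ N + 1 := by
  apply csSup_le'
  rintro h ⟨r, c, _, _, rfl⟩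
  exact Nat.add_le_add_right (Nat.lt_succ_iff.mp r.isLt) 1

lemma le_hess {r c : Fin (N + 1)} (hrc : M r c ≠ 0) {i : ℕ} (hci : (c : ℕ) < i) :
    (r : ℕ) + 1 ≤ hessFn N M i :=
  le_csSup (hess_bdd i) ⟨r, c, hrc, hci, rfl⟩

lemma hess_attained {i : ℕ} (h : 0 < hessFn N M i) :
    ∃ r c : Fin (N + 1), M r c ≠ 0 ∧ (c : ℕ) < i ∧ hessFn N M i = (r : ℕ) + 1 := by
  have hne : {h : ℕ | ∃ r c : Fin (N + 1), M r c ≠ 0 ∧ (c : ℕ) < i ∧ h = (r : ℕ) + 1}.Nonempty := by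
    by_contra hc
    rw [Set.not_nonempty_iff_eq_empty] at hc
    simp [hessFn, hc] at h
  have := Nat.sSup_mem hne (hess_bdd i)
  exact this

end Hess

section Corner
variable {K : Type*} [Field K] {N : ℕ}

lemma Oplus_convex : Convex ℝ (Oplus N) := by
  intro x hx y hy a b ha hb hab
  constructor
  · have : ∑ l, (a • x + b • y) l = a * ∑ l, x l + b * ∑ l, y l := by
      simp [Finset.mul_sum, Finset.sum_add_distrib]
    rw [this, hx.1, hy.1]; ring
  · intro k
    have : sfun N k (a • x + b • y) = a * sfun N k x + b * sfun N k y := by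
      simp [sfun, Finset.mul_sum, Finset.sum_add_distrib]
    rw [this]
    have := hx.2 k; have := hy.2 k
    positivity

lemma Oplus_add {o o' : Fin (N + 1) → ℝ} (h : o ∈ Oplus N) (h' : o' ∈ Oplus N) :
    o + o' ∈ Oplus N := by
  constructor
  · have : ∑ l, (o + o') l = ∑ l, o l + ∑ l, o' l := by simp [Finset.sum_add_distrib]
    rw [this, h.1, h'.1]; ring
  · intro k
    have : sfun N k (o + o') = sfun N k o + sfun N k o' := by
      simp [sfun, Finset.sum_add_distrib]
    rw [this]
    linarith [h.2 k, h'.2 k]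

lemma corner_convex (M : Matrix (Fin (N + 1)) (Fin (N + 1)) K) : Convex ℝ (cornerOf N M) :=
  (convex_convexHull ℝ _).add Oplus_convex

lemma corner_add_Oplus {M : Matrix (Fin (N + 1)) (Fin (N + 1)) K}
    {x o : Fin (N + 1) → ℝ} (hx : x ∈ cornerOf N M) (ho : o ∈ Oplus N) :
    x + o ∈ cornerOf N M := by
  obtain ⟨y, hy, o', ho', rfl⟩ := hx
  exact ⟨y, hy, o' + o, Oplus_add ho' ho, (add_assoc _ _ _).symm⟩

lemma corner_subset_of_gen {M₁ M₂ : Matrix (Fin (N + 1)) (Fin (N + 1)) K}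
    (h : ∀ r c : Fin (N + 1), M₁ r c ≠ 0 → rootVec N r c ∈ cornerOf N M₂) :
    cornerOf N M₁ ⊆ cornerOf N M₂ := by
  rintro x ⟨y, hy, o, ho, rfl⟩
  have hy2 : y ∈ cornerOf N M₂ := by
    refine convexHull_min ?_ (corner_convex M₂) hy
    rintro _ ⟨p, hp, rfl⟩
    exact h p.1 p.2 hp
  exact corner_add_Oplus hy2 ho

end Corner
noncomputable def ind {N : ℕ} (i : Fin (N + 1)) (k : Fin N) : ℝ :=
  if (i : ℕ) ≤ (k : ℕ) then 1 else 0

lemma ind_bounds {N : ℕ} (i : Fin (N + 1)) (k : Fin N) : 0 ≤ ind i k ∧ ind i k ≤ 1 := by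
  unfold ind; split <;> norm_num

lemma term_ge_neg_one {N : ℕ} (a b : Fin (N + 1)) (k : Fin N) :
    -1 ≤ ind a k - ind b k := by
  have h1 := ind_bounds a k; have h2 := ind_bounds b k; linarith [h1.1, h2.2]

lemma term_nonneg {N : ℕ} {a b : Fin (N + 1)} {k : Fin N}
    (h : ¬((b : ℕ) ≤ (k : ℕ) ∧ (k : ℕ) < (a : ℕ))) : 0 ≤ ind a k - ind b k := by
  unfold ind
  by_cases hb : (b : ℕ) ≤ (k : ℕ)
  · have ha : (a : ℕ) ≤ (k : ℕ) := by omega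
    simp [ha, hb]
  · have h2 := ind_bounds a k
    simp only [hb, if_neg, if_false]
    unfold ind at h2; linarith [h2.1]

lemma term_eq_one {N : ℕ} {a b : Fin (N + 1)} {k : Fin N}
    (h1 : (a : ℕ) ≤ (k : ℕ)) (h2 : (k : ℕ) < (b : ℕ)) : ind a k - ind b k = 1 := by
  unfold ind
  rw [if_pos h1, if_neg (by omega)]
  norm_num

lemma term_eq_neg_one {N : ℕ} {a b : Fin (N + 1)} {k : Fin N}
    (h1 : (b : ℕ) ≤ (k : ℕ)) (h2 : (k : ℕ) < (a : ℕ)) : ind a k - ind b k = -1 := by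
  unfold ind
  rw [if_neg (by omega), if_pos h1]
  norm_num

lemma sum_bound_neg {N : ℕ} (S : Finset (Fin N)) (t : Fin N → ℝ)
    (h1 : ∀ k ∈ S, -1 ≤ t k) {k₀ : Fin N} (hk₀ : k₀ ∈ S) (h0 : 0 ≤ t k₀) :
    1 - (S.card : ℝ) ≤ ∑ k ∈ S, t k := by
  rw [← Finset.add_sum_erase S t hk₀]
  have hcard : ((S.erase k₀).card : ℝ) = (S.card : ℝ) - 1 := by
    rw [Finset.card_erase_of_mem hk₀]
    have : 1 ≤ S.card := Finset.card_pos.mpr ⟨k₀, hk₀⟩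
    push_cast [Nat.cast_sub this]
    ring
  have hsum : -((S.card : ℝ) - 1) ≤ ∑ k ∈ S.erase k₀, t k := by
    have := Finset.card_nsmul_le_sum (S.erase k₀) t (-1)
      (fun k hk => h1 k (Finset.mem_of_mem_erase hk))
    rw [nsmul_eq_mul] at this
    rw [← hcard]; linarith
  linarith

lemma sum_ge_one {N : ℕ} (S : Finset (Fin N)) (t : Fin N → ℝ)
    (h1 : ∀ k ∈ S, 0 ≤ t k) {k₀ : Fin N} (hk₀ : k₀ ∈ S) (h0 : 1 ≤ t k₀) :
    1 ≤ ∑ k ∈ S, t k :=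
  le_trans h0 (Finset.single_le_sum h1 hk₀)
section NotMem
variable {K : Type*} [Field K] {N : ℕ} {M : Matrix (Fin (N + 1)) (Fin (N + 1)) K}

lemma sum_sfun_root (S : Finset (Fin N)) (i j : Fin (N + 1)) :
    ∑ k ∈ S, sfun N k (rootVec N i j) = ∑ k ∈ S, (ind i k - ind j k) :=
  Finset.sum_congr rfl fun k _ => sfun_root N k i j

lemma root_not_mem_lower {r c : Fin (N + 1)} (hcr : (c : ℕ) < (r : ℕ))
    (hno : ∀ a b : Fin (N + 1), M a b ≠ 0 → ¬((b : ℕ) ≤ (c : ℕ) ∧ (r : ℕ) ≤ (a : ℕ))) :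
    rootVec N r c ∉ cornerOf N M := by
  intro hmem
  set S := Finset.univ.filter (fun k : Fin N => (c : ℕ) ≤ (k : ℕ) ∧ (k : ℕ) < (r : ℕ)) with hS
  have hrN : (r : ℕ) ≤ N := Nat.lt_succ_iff.mp r.isLt
  have hval : ∑ k ∈ S, sfun N k (rootVec N r c) = -(S.card : ℝ) := by
    rw [sum_sfun_root]
    rw [Finset.sum_congr rfl (fun k hk => ?_), Finset.sum_const, nsmul_eq_mul, mul_neg_one]
    have hk' := Finset.mem_filter.mp hk
    exact term_eq_neg_one hk'.2.1 hk'.2.2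
  have hb : ∀ p : Fin (N + 1) × Fin (N + 1), M p.1 p.2 ≠ 0 →
      1 - (S.card : ℝ) ≤ ∑ k ∈ S, sfun N k (rootVec N p.1 p.2) := by
    rintro ⟨a, b⟩ hp
    dsimp only at hp ⊢
    rw [sum_sfun_root]
    by_cases hcb : (c : ℕ) < (b : ℕ)
    · refine sum_bound_neg S _ (fun k _ => term_ge_neg_one a b k)
        (k₀ := ⟨(c : ℕ), lt_of_lt_of_le hcr hrN⟩) ?_ ?_
      · simp [hS, Finset.mem_filter, hcr]
      · exact term_nonneg (by simp; omega)
    · have hra : (a : ℕ) < (r : ℕ) := by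
        have := hno a b hp; omega
      have hr1 : (r : ℕ) - 1 < N := by omega
      refine sum_bound_neg S _ (fun k _ => term_ge_neg_one a b k)
        (k₀ := ⟨(r : ℕ) - 1, hr1⟩) ?_ ?_
      · simp only [hS, Finset.mem_filter, Finset.mem_univ, true_and, Fin.val_mk]; omega
      · exact term_nonneg (by simp; omega)
  have := corner_bound S _ hb _ hmem
  rw [hval] at this
  linarith

lemma root_not_mem_upper {r c : Fin (N + 1)} (hrc : (r : ℕ) < (c : ℕ))
    (hup : ∀ a b : Fin (N + 1), M a b ≠ 0 → (a : ℕ) < (b : ℕ))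
    (hno : ∀ a b : Fin (N + 1), M a b ≠ 0 → ¬((r : ℕ) ≤ (a : ℕ) ∧ (b : ℕ) ≤ (c : ℕ))) :
    rootVec N r c ∉ cornerOf N M := by
  intro hmem
  set S := Finset.univ.filter (fun k : Fin N => ¬((r : ℕ) ≤ (k : ℕ) ∧ (k : ℕ) < (c : ℕ)))
    with hS
  have hval : ∑ k ∈ S, sfun N k (rootVec N r c) = 0 := by
    rw [sum_sfun_root]
    refine Finset.sum_eq_zero fun k hk => ?_
    have hk' := (Finset.mem_filter.mp hk).2
    unfold ind
    split_ifs <;> first | (exfalso; omega) | norm_num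
  have hb : ∀ p : Fin (N + 1) × Fin (N + 1), M p.1 p.2 ≠ 0 →
      1 ≤ ∑ k ∈ S, sfun N k (rootVec N p.1 p.2) := by
    rintro ⟨a, b⟩ hp
    dsimp only at hp ⊢
    rw [sum_sfun_root]
    have hab := hup a b hp
    have hbN : (b : ℕ) ≤ N := Nat.lt_succ_iff.mp b.isLt
    by_cases hra : (a : ℕ) < (r : ℕ)
    · refine sum_ge_one S _ (fun k _ => term_nonneg (by omega))
        (k₀ := ⟨(a : ℕ), by omega⟩) ?_ ?_
      · simp [hS, Finset.mem_filter]; omega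
      · exact le_of_eq (term_eq_one (by simp) (by simp; omega)).symm
    · have hcb : (c : ℕ) < (b : ℕ) := by
        have := hno a b hp; omega
      refine sum_ge_one S _ (fun k _ => term_nonneg (by omega))
        (k₀ := ⟨(b : ℕ) - 1, by omega⟩) ?_ ?_
      · simp [hS, Finset.mem_filter]; omega
      · exact le_of_eq (term_eq_one (by simp; omega) (by simp only [Fin.val_mk]; omega)).symm
  have := corner_bound S _ hb _ hmem
  rw [hval] at this
  linarith

lemma zero_not_mem_of_upper
    (hup : ∀ a b : Fin (N + 1), M a b ≠ 0 → (a : ℕ) < (b : ℕ)) :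
    (0 : Fin (N + 1) → ℝ) ∉ cornerOf N M := by
  intro hmem
  have hval : ∑ k ∈ (Finset.univ : Finset (Fin N)), sfun N k (0 : Fin (N + 1) → ℝ) = 0 := by
    refine Finset.sum_eq_zero fun k _ => ?_
    simp [sfun]
  have hb : ∀ p : Fin (N + 1) × Fin (N + 1), M p.1 p.2 ≠ 0 →
      1 ≤ ∑ k ∈ (Finset.univ : Finset (Fin N)), sfun N k (rootVec N p.1 p.2) := by
    rintro ⟨a, b⟩ hp
    dsimp only at hp ⊢
    rw [sum_sfun_root]
    have hab := hup a b hp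
    have hbN : (b : ℕ) ≤ N := Nat.lt_succ_iff.mp b.isLt
    refine sum_ge_one _ _ (fun k _ => term_nonneg (by omega))
      (k₀ := ⟨(a : ℕ), by omega⟩) (Finset.mem_univ _) ?_
    exact le_of_eq (term_eq_one (by simp) (by simp; omega)).symm
  have := corner_bound Finset.univ _ hb _ hmem
  rw [hval] at this
  linarith

lemma zero_mem_of_lower {a b : Fin (N + 1)} (hba : (b : ℕ) ≤ (a : ℕ)) (hab : M a b ≠ 0) :
    (0 : Fin (N + 1) → ℝ) ∈ cornerOf N M := by
  have h0 : rootVec N a a = 0 := by simp [rootVec]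
  have := mem_corner_of_entry hab (i := a) (j := a) (fun k => ?_)
  · rwa [h0] at this
  · rw [sfun_root, sfun_root]
    split_ifs <;> first | (exfalso; omega) | norm_num
end NotMem

section Main
variable {K : Type*} [Field K] {N : ℕ}

lemma root_self_mem {M : Matrix (Fin (N + 1)) (Fin (N + 1)) K} {r c : Fin (N + 1)}
    (h : M r c ≠ 0) : rootVec N r c ∈ cornerOf N M :=
  mem_corner_of_entry h (fun _ => le_refl _)

lemma notP1_upper {M : Matrix (Fin (N + 1)) (Fin (N + 1)) K}
    (h : ¬ ∃ r c : Fin (N + 1), (c : ℕ) ≤ (r : ℕ) ∧ M r c ≠ 0) :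
    ∀ a b : Fin (N + 1), M a b ≠ 0 → (a : ℕ) < (b : ℕ) := by
  intro a b hab
  by_contra hge
  push_neg at h hge
  exact hab (h a b hge)

lemma profile_le_P1 {M₁ M₂ : Matrix (Fin (N + 1)) (Fin (N + 1)) K}
    (hc : cornerOf N M₁ = cornerOf N M₂) (i : ℕ) :
    max i (hessFn N M₁ i) ≤ max i (hessFn N M₂ i) := by
  by_contra hlt
  push_neg at hlt
  have h1i : i < hessFn N M₁ i := by omega
  have h12 : hessFn N M₂ i < hessFn N M₁ i := by omega
  obtain ⟨r, c, hrc, hci, hm⟩ := hess_attained (M := M₁) (i := i) (by omega)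
  have hcr : (c : ℕ) < (r : ℕ) := by omega
  have hmem : rootVec N r c ∈ cornerOf N M₂ := hc ▸ root_self_mem hrc
  refine root_not_mem_lower hcr (fun a b hab ⟨hbc, hra⟩ => ?_) hmem
  have := le_hess hab (lt_of_le_of_lt hbc hci)
  omega

lemma hess_le_notP1 {M₁ M₂ : Matrix (Fin (N + 1)) (Fin (N + 1)) K}
    (h1up : ∀ a b : Fin (N + 1), M₁ a b ≠ 0 → (a : ℕ) < (b : ℕ))
    (h2up : ∀ a b : Fin (N + 1), M₂ a b ≠ 0 → (a : ℕ) < (b : ℕ))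
    (hc : cornerOf N M₁ = cornerOf N M₂) (i : ℕ) :
    hessFn N M₁ i ≤ hessFn N M₂ i := by
  by_contra hlt
  push_neg at hlt
  obtain ⟨r, c, hrc, hci, hm⟩ := hess_attained (M := M₁) (i := i) (by omega)
  have hcr : (r : ℕ) < (c : ℕ) := h1up r c hrc
  have hmem : rootVec N r c ∈ cornerOf N M₂ := hc ▸ root_self_mem hrc
  refine root_not_mem_upper hcr h2up (fun a b hab ⟨hra, hbc⟩ => ?_) hmem
  have := le_hess hab (lt_of_le_of_lt hbc hci)
  omega

lemma hess_le_N {M : Matrix (Fin (N + 1)) (Fin (N + 1)) K}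
    (hup : ∀ a b : Fin (N + 1), M a b ≠ 0 → (a : ℕ) < (b : ℕ)) (i : ℕ) :
    hessFn N M i ≤ N := by
  apply csSup_le'
  rintro h ⟨r, c, hrc, _, rfl⟩
  have := hup r c hrc
  have := Nat.lt_succ_iff.mp c.isLt
  omega

lemma profile_eq_iff_P1 {M : Matrix (Fin (N + 1)) (Fin (N + 1)) K} :
    profileFn N M (N + 1) = N + 1 ↔
      ∃ r c : Fin (N + 1), (c : ℕ) ≤ (r : ℕ) ∧ M r c ≠ 0 := by
  constructor
  · intro h
    by_contra hP
    rw [profileFn, if_neg hP] at h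
    have := hess_le_N (notP1_upper hP) (N + 1)
    omega
  · intro hP
    rw [profileFn, if_pos hP]
    have := hess_le (M := M) (N + 1)
    omega

-- backward direction, case 1 (both have an on-or-below-diagonal entry)
lemma corner_subset_P1 {M₁ M₂ : Matrix (Fin (N + 1)) (Fin (N + 1)) K}
    (hP2 : ∃ r c : Fin (N + 1), (c : ℕ) ≤ (r : ℕ) ∧ M₂ r c ≠ 0)
    (hprof : ∀ i ≤ N + 1, max i (hessFn N M₁ i) ≤ max i (hessFn N M₂ i)) :
    cornerOf N M₁ ⊆ cornerOf N M₂ := by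
  obtain ⟨a₀, b₀, hb₀, h₀⟩ := hP2
  refine corner_subset_of_gen fun r c hrc => ?_
  rcases lt_trichotomy (r : ℕ) (c : ℕ) with hlt | heq | hgt
  · -- strictly upper entry: dominated by the lower entry (a₀, b₀) of M₂
    refine mem_corner_of_entry h₀ fun k => ?_
    rw [sfun_root, sfun_root]
    split_ifs <;> first | (exfalso; omega) | norm_num
  · -- diagonal entry: rootVec r c = 0
    have hec : r = c := Fin.ext heq
    subst hec
    have h0 : rootVec N r r = 0 := by simp [rootVec]
    rw [h0]
    exact zero_mem_of_lower hb₀ h₀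
  · -- strictly lower entry
    have hcN : (c : ℕ) + 1 ≤ N + 1 := by have := Nat.lt_succ_iff.mp c.isLt; omega
    have h1 : (r : ℕ) + 1 ≤ hessFn N M₁ ((c : ℕ) + 1) := le_hess hrc (by omega)
    have h2 : (r : ℕ) + 1 ≤ hessFn N M₂ ((c : ℕ) + 1) := by
      have := hprof ((c : ℕ) + 1) hcN
      omega
    obtain ⟨a, b, hab, hbc, hm⟩ := hess_attained (M := M₂) (i := (c : ℕ) + 1) (by omega)
    refine mem_corner_of_entry hab fun k => ?_
    have hra : (r : ℕ) ≤ (a : ℕ) := by omega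
    have hbc' : (b : ℕ) ≤ (c : ℕ) := by omega
    rw [sfun_root, sfun_root]
    split_ifs <;> first | (exfalso; omega) | norm_num

-- backward direction, case 2 (both strictly upper)
lemma corner_subset_notP1 {M₁ M₂ : Matrix (Fin (N + 1)) (Fin (N + 1)) K}
    (h1up : ∀ a b : Fin (N + 1), M₁ a b ≠ 0 → (a : ℕ) < (b : ℕ))
    (h2up : ∀ a b : Fin (N + 1), M₂ a b ≠ 0 → (a : ℕ) < (b : ℕ))
    (hprof : ∀ i ≤ N + 1, hessFn N M₁ i ≤ hessFn N M₂ i) :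
    cornerOf N M₁ ⊆ cornerOf N M₂ := by
  refine corner_subset_of_gen fun r c hrc => ?_
  have hlt : (r : ℕ) < (c : ℕ) := h1up r c hrc
  have hcN : (c : ℕ) + 1 ≤ N + 1 := by have := Nat.lt_succ_iff.mp c.isLt; omega
  have h1 : (r : ℕ) + 1 ≤ hessFn N M₁ ((c : ℕ) + 1) := le_hess hrc (by omega)
  have h2 : (r : ℕ) + 1 ≤ hessFn N M₂ ((c : ℕ) + 1) := le_trans h1 (hprof _ hcN)
  obtain ⟨a, b, hab, hbc, hm⟩ := hess_attained (M := M₂) (i := (c : ℕ) + 1) (by omega)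
  have hab' : (a : ℕ) < (b : ℕ) := h2up a b hab
  refine mem_corner_of_entry hab fun k => ?_
  have hra : (r : ℕ) ≤ (a : ℕ) := by omega
  have hbc' : (b : ℕ) ≤ (c : ℕ) := by omega
  rw [sfun_root, sfun_root]
  split_ifs <;> first | (exfalso; omega) | norm_num

end Main

theorem stmt12 {K : Type*} [Field K] (N : ℕ)
    (M₁ M₂ : Matrix (Fin (N + 1)) (Fin (N + 1)) K) (h₁ : M₁ ≠ 0) (h₂ : M₂ ≠ 0) :
    cornerOf N M₁ = cornerOf N M₂ ↔
      ∀ i ≤ N + 1, profileFn N M₁ i = profileFn N M₂ i := by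
  constructor
  · intro hc i _
    by_cases hP1 : ∃ r c : Fin (N + 1), (c : ℕ) ≤ (r : ℕ) ∧ M₁ r c ≠ 0
    · by_cases hP2 : ∃ r c : Fin (N + 1), (c : ℕ) ≤ (r : ℕ) ∧ M₂ r c ≠ 0
      · rw [profileFn, if_pos hP1, profileFn, if_pos hP2]
        exact le_antisymm (profile_le_P1 hc i) (profile_le_P1 hc.symm i)
      · exfalso
        obtain ⟨a, b, hba, hab⟩ := hP1
        exact zero_not_mem_of_upper (notP1_upper hP2) (hc ▸ zero_mem_of_lower hba hab)
    · by_cases hP2 : ∃ r c : Fin (N + 1), (c : ℕ) ≤ (r : ℕ) ∧ M₂ r c ≠ 0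
      · exfalso
        obtain ⟨a, b, hba, hab⟩ := hP2
        exact zero_not_mem_of_upper (notP1_upper hP1) (hc ▸ zero_mem_of_lower hba hab)
      · rw [profileFn, if_neg hP1, profileFn, if_neg hP2]
        exact le_antisymm (hess_le_notP1 (notP1_upper hP1) (notP1_upper hP2) hc i)
          (hess_le_notP1 (notP1_upper hP2) (notP1_upper hP1) hc.symm i)
  · intro hp
    have hsame : (∃ r c : Fin (N + 1), (c : ℕ) ≤ (r : ℕ) ∧ M₁ r c ≠ 0) ↔
        (∃ r c : Fin (N + 1), (c : ℕ) ≤ (r : ℕ) ∧ M₂ r c ≠ 0) := by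
      rw [← profile_eq_iff_P1, ← profile_eq_iff_P1, hp (N + 1) le_rfl]
    by_cases hP1 : ∃ r c : Fin (N + 1), (c : ℕ) ≤ (r : ℕ) ∧ M₁ r c ≠ 0
    · have hP2 := hsame.mp hP1
      have hmax : ∀ i ≤ N + 1, max i (hessFn N M₁ i) = max i (hessFn N M₂ i) := by
        intro i hi
        have := hp i hi
        rwa [profileFn, if_pos hP1, profileFn, if_pos hP2] at this
      exact Set.Subset.antisymm
        (corner_subset_P1 hP2 (fun i hi => (hmax i hi).le))
        (corner_subset_P1 hP1 (fun i hi => (hmax i hi).ge))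
    · have hP2 := fun h => hP1 (hsame.mpr h)
      have hmax : ∀ i ≤ N + 1, hessFn N M₁ i = hessFn N M₂ i := by
        intro i hi
        have := hp i hi
        rwa [profileFn, if_neg hP1, profileFn, if_neg hP2] at this
      exact Set.Subset.antisymm
        (corner_subset_notP1 (notP1_upper hP1) (notP1_upper hP2) (fun i hi => (hmax i hi).le))
        (corner_subset_notP1 (notP1_upper hP2) (notP1_upper hP1) (fun i hi => (hmax i hi).ge))
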